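/- Let α > 1 and d(i,j) = max(|i-j|,1), u = 2^α ∑_m d(0,m)^{-α}. For any fixed integers n ≥ 1 and any constant c > 0, the quadruple sum ∑_{k≥n, ℓ<n} ∑_{k'≥0, ℓ'<0} ∑_{{a,b}={k,ℓ}, {a',b'}={k',ℓ'}} d(a,b)^{-α} d(a',b)^{-α} d(a,a')^{-α} is at most u² ∑_{k≥n, ℓ'<0} d(k,ℓ')^{-2α}, hence at most C n^{2-2α}. -/

import Mathlib

noncomputable def dZ (i j : ℤ) : ℝ := max |(i : ℝ) - (j : ℝ)| 1

namespace Stmt14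
open ENNReal

lemma one_le_dZ (i j : ℤ) : 1 ≤ dZ i j := le_max_right _ _
lemma dZ_pos (i j : ℤ) : 0 < dZ i j := lt_of_lt_of_le one_pos (one_le_dZ i j)
lemma dZ_symm (i j : ℤ) : dZ i j = dZ j i := by unfold dZ; rw [abs_sub_comm]
lemma dZ_shift (x m : ℤ) : dZ x m = dZ 0 (m - x) := by
  unfold dZ; push_cast; rw [zero_sub, abs_neg, abs_sub_comm]

lemma rpow_dZ_nonneg (α : ℝ) (i j : ℤ) : 0 ≤ dZ i j ^ (-α) :=
  Real.rpow_nonneg (dZ_pos i j).le _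

lemma summable_aux (α : ℝ) (hα : 1 < α) : Summable (fun i : ℕ => ((i : ℝ) + 1) ^ (-α)) := by
  have h : Summable (fun i : ℕ => ((i : ℝ)) ^ (-α)) :=
    Real.summable_nat_rpow.mpr (by linarith)
  have := (summable_nat_add_iff 1).mpr h
  simpa using this

lemma dZ_zero_nat (i : ℕ) : dZ 0 (i + 1 : ℕ) = (i : ℝ) + 1 := by
  unfold dZ; push_cast
  rw [zero_sub, abs_neg, abs_of_nonneg (by positivity), max_eq_left (by linarith [Nat.cast_nonneg (α := ℝ) i])]

lemma summable_base (α : ℝ) (hα : 1 < α) : Summable (fun m : ℤ => dZ 0 m ^ (-α)) := by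
  have hnat : Summable (fun i : ℕ => dZ 0 (i : ℤ) ^ (-α)) := by
    refine (summable_nat_add_iff 1).mp ?_
    have : (fun i : ℕ => dZ 0 ((i + 1 : ℕ) : ℤ) ^ (-α)) = fun i : ℕ => ((i : ℝ) + 1) ^ (-α) := by
      funext i; rw [dZ_zero_nat]
    rw [this]; exact summable_aux α hα
  have hneg : Summable (fun i : ℕ => dZ 0 (-(i : ℤ)) ^ (-α)) := by
    have : (fun i : ℕ => dZ 0 (-(i : ℤ)) ^ (-α)) = fun i : ℕ => dZ 0 (i : ℤ) ^ (-α) := by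
      funext i
      have : dZ 0 (-(i:ℤ)) = dZ 0 (i:ℤ) := by unfold dZ; push_cast; simp [abs_sub_comm]
      rw [this]
    rw [this]; exact hnat
  exact Summable.of_nat_of_neg hnat hneg

noncomputable def Dd (α : ℝ) (x y : ℤ) : ℝ≥0∞ := ENNReal.ofReal (dZ x y ^ (-α))

lemma Dd_symm (α : ℝ) (x y : ℤ) : Dd α x y = Dd α y x := by unfold Dd; rw [dZ_symm]

lemma tsum_Dd_left (α : ℝ) (x : ℤ) : ∑' m : ℤ, Dd α x m = ∑' m : ℤ, Dd α 0 m := by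
  have h1 : ∀ m : ℤ, Dd α x m = Dd α 0 (m - x) := fun m => by unfold Dd; rw [dZ_shift x m]
  calc ∑' m : ℤ, Dd α x m = ∑' m : ℤ, Dd α 0 ((Equiv.subRight x) m) := by
        exact tsum_congr fun m => h1 m
    _ = ∑' m : ℤ, Dd α 0 m := (Equiv.subRight x).tsum_eq _

lemma tsum_Dd_right (α : ℝ) (y : ℤ) : ∑' m : ℤ, Dd α m y = ∑' m : ℤ, Dd α 0 m := by
  have h1 : ∀ m : ℤ, Dd α m y = Dd α 0 (y - m) := fun m => by unfold Dd; rw [dZ_shift m y]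
  calc ∑' m : ℤ, Dd α m y = ∑' m : ℤ, Dd α 0 ((Equiv.subLeft y) m) := by
        exact tsum_congr fun m => h1 m
    _ = ∑' m : ℤ, Dd α 0 m := (Equiv.subLeft y).tsum_eq _

lemma Dd_mul_self (α : ℝ) (x y : ℤ) : Dd α x y * Dd α x y = ENNReal.ofReal (dZ x y ^ (-(2*α))) := by
  unfold Dd
  rw [← ENNReal.ofReal_mul (rpow_dZ_nonneg α x y), ← Real.rpow_add (dZ_pos x y)]
  congr 1
  ring_nf

lemma conv_pointwise (α : ℝ) (hα : 1 < α) (x y m : ℤ) :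
    dZ x m ^ (-α) * dZ m y ^ (-α) ≤
      2 ^ α * dZ x y ^ (-α) * (dZ x m ^ (-α) + dZ m y ^ (-α)) := by
  have h2 : (0:ℝ) < 2 := two_pos
  have hbig : ∀ w z : ℤ, dZ x y ≤ 2 * dZ w z → dZ w z ^ (-α) ≤ 2 ^ α * dZ x y ^ (-α) := by
    intro w z h
    have h1 : (2 * dZ w z) ^ (-α) ≤ dZ x y ^ (-α) :=
      Real.rpow_le_rpow_of_nonpos (dZ_pos x y) h (by linarith)
    have h2' : (2 * dZ w z) ^ (-α) = 2 ^ (-α) * dZ w z ^ (-α) :=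
      Real.mul_rpow (by norm_num) (dZ_pos w z).le
    have h3 : (0:ℝ) < 2 ^ α := Real.rpow_pos_of_pos h2 α
    have h4 : (2:ℝ) ^ (-α) = (2 ^ α)⁻¹ := by rw [Real.rpow_neg h2.le]
    rw [h2', h4] at h1
    calc dZ w z ^ (-α) = 2 ^ α * ((2 ^ α)⁻¹ * dZ w z ^ (-α)) := by field_simp
      _ ≤ 2 ^ α * dZ x y ^ (-α) := by
          exact mul_le_mul_of_nonneg_left h1 h3.le
  have htri : dZ x y ≤ dZ x m + dZ m y := by
    have h1 : |(x:ℝ) - y| ≤ |(x:ℝ) - m| + |(m:ℝ) - y| := abs_sub_le _ _ _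
    have h2' : |(x:ℝ) - m| ≤ dZ x m := le_max_left _ _
    have h3 : |(m:ℝ) - y| ≤ dZ m y := le_max_left _ _
    have h4 : (1:ℝ) ≤ dZ x m + dZ m y := by
      have := one_le_dZ x m; have := one_le_dZ m y; linarith
    exact max_le (by linarith) h4
  rcases le_total (dZ x m) (dZ m y) with hc | hc
  · have : dZ m y ^ (-α) ≤ 2 ^ α * dZ x y ^ (-α) := hbig m y (by linarith)
    calc dZ x m ^ (-α) * dZ m y ^ (-α) ≤ dZ x m ^ (-α) * (2 ^ α * dZ x y ^ (-α)) :=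
          mul_le_mul_of_nonneg_left this (rpow_dZ_nonneg α x m)
      _ = 2 ^ α * dZ x y ^ (-α) * dZ x m ^ (-α) := by ring
      _ ≤ 2 ^ α * dZ x y ^ (-α) * (dZ x m ^ (-α) + dZ m y ^ (-α)) := by
          have h3 : (0:ℝ) < 2 ^ α := Real.rpow_pos_of_pos h2 α
          have := rpow_dZ_nonneg α m y
          have := rpow_dZ_nonneg α x y
          nlinarith [rpow_dZ_nonneg α x m]
  · have : dZ x m ^ (-α) ≤ 2 ^ α * dZ x y ^ (-α) := hbig x m (by linarith)
    calc dZ x m ^ (-α) * dZ m y ^ (-α) ≤ (2 ^ α * dZ x y ^ (-α)) * dZ m y ^ (-α) :=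
          mul_le_mul_of_nonneg_right this (rpow_dZ_nonneg α m y)
      _ = 2 ^ α * dZ x y ^ (-α) * dZ m y ^ (-α) := by ring
      _ ≤ 2 ^ α * dZ x y ^ (-α) * (dZ x m ^ (-α) + dZ m y ^ (-α)) := by
          have h3 : (0:ℝ) < 2 ^ α := Real.rpow_pos_of_pos h2 α
          have := rpow_dZ_nonneg α x m
          have := rpow_dZ_nonneg α x y
          nlinarith [rpow_dZ_nonneg α m y]

lemma conv_sum (α : ℝ) (hα : 1 < α) (u : ℝ) (hu : u = 2 ^ α * ∑' m : ℤ, dZ 0 m ^ (-α))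
    (x y : ℤ) :
    ∑' m : ℤ, Dd α x m * Dd α m y ≤ ENNReal.ofReal (2 * u) * Dd α x y := by
  set T : ℝ := ∑' m : ℤ, dZ 0 m ^ (-α) with hT
  have hT0 : 0 ≤ T := tsum_nonneg fun m => rpow_dZ_nonneg α 0 m
  have h2α : (0:ℝ) ≤ 2 ^ α := (Real.rpow_pos_of_pos two_pos α).le
  have hTe : ∑' m : ℤ, Dd α 0 m = ENNReal.ofReal T := by
    rw [hT, ENNReal.ofReal_tsum_of_nonneg (fun m => rpow_dZ_nonneg α 0 m) (summable_base α hα)]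
    rfl
  have hpt : ∀ m : ℤ, Dd α x m * Dd α m y ≤
      ENNReal.ofReal (2 ^ α * dZ x y ^ (-α)) * (Dd α x m + Dd α m y) := by
    intro m
    unfold Dd
    rw [← ENNReal.ofReal_mul (rpow_dZ_nonneg α x m),
        ← ENNReal.ofReal_add (rpow_dZ_nonneg α x m) (rpow_dZ_nonneg α m y),
        ← ENNReal.ofReal_mul (mul_nonneg h2α (rpow_dZ_nonneg α x y))]
    exact ENNReal.ofReal_le_ofReal (conv_pointwise α hα x y m)
  calc ∑' m : ℤ, Dd α x m * Dd α m y
      ≤ ∑' m : ℤ, ENNReal.ofReal (2 ^ α * dZ x y ^ (-α)) * (Dd α x m + Dd α m y) :=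
        ENNReal.tsum_le_tsum hpt
    _ = ENNReal.ofReal (2 ^ α * dZ x y ^ (-α)) *
          ((∑' m : ℤ, Dd α x m) + ∑' m : ℤ, Dd α m y) := by
        rw [ENNReal.tsum_mul_left, ENNReal.tsum_add]
    _ = ENNReal.ofReal (2 ^ α * dZ x y ^ (-α)) * (ENNReal.ofReal T + ENNReal.ofReal T) := by
        rw [tsum_Dd_left, tsum_Dd_right, hTe]
    _ = ENNReal.ofReal (2 * u) * Dd α x y := by
        rw [← ENNReal.ofReal_add hT0 hT0,
          ← ENNReal.ofReal_mul (mul_nonneg h2α (rpow_dZ_nonneg α x y))]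
        unfold Dd
        rw [← ENNReal.ofReal_mul (by nlinarith [rpow_dZ_nonneg α x y, rpow_dZ_nonneg α 0 (0:ℤ)])]
        congr 1
        rw [hu]; ring

lemma conv_nat (α : ℝ) (hα : 1 < α) (u : ℝ) (hu : u = 2 ^ α * ∑' m : ℤ, dZ 0 m ^ (-α))
    (e : ℕ → ℤ) (he : Function.Injective e) (x y : ℤ) :
    ∑' v : ℕ, Dd α x (e v) * Dd α (e v) y ≤ ENNReal.ofReal (2 * u) * Dd α x y :=
  (tsum_comp_le_tsum_of_injective he (fun m => Dd α x m * Dd α m y)).trans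
    (conv_sum α hα u hu x y)

open Set Finset in
lemma tsum_le_of_ofReal_le {ι : Type*} {f : ι → ℝ} (hf : ∀ i, 0 ≤ f i) {B : ℝ} (hB : 0 ≤ B)
    (h : ∑' i, ENNReal.ofReal (f i) ≤ ENNReal.ofReal B) : ∑' i, f i ≤ B := by
  have hfin : ∑' i, ENNReal.ofReal (f i) ≠ ⊤ := (lt_of_le_of_lt h ENNReal.ofReal_lt_top).ne
  have hs : Summable f :=
    (ENNReal.summable_toReal hfin).congr fun i => ENNReal.toReal_ofReal (hf i)
  rw [← ENNReal.ofReal_le_ofReal_iff hB, ENNReal.ofReal_tsum_of_nonneg hf hs]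
  exact h

lemma summable_of_ofReal_lt_top {ι : Type*} {f : ι → ℝ} (hf : ∀ i, 0 ≤ f i)
    (h : ∑' i, ENNReal.ofReal (f i) ≠ ⊤) : Summable f :=
  (ENNReal.summable_toReal h).congr fun i => ENNReal.toReal_ofReal (hf i)

lemma mvt_step (α : ℝ) (hα : 1 < α) (x : ℝ) (hx : 1 ≤ x) :
    (α - 1) * (x + 1) ^ (-α) ≤ x ^ (1 - α) - (x + 1) ^ (1 - α) := by
  have hx0 : (0:ℝ) < x := by linarith
  obtain ⟨c, hc, hceq⟩ := exists_hasDerivAt_eq_slope (fun y => y ^ (1 - α))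
      (fun y => (1 - α) * y ^ (-α)) (by linarith : x < x + 1)
      (by
        apply ContinuousOn.rpow_const continuousOn_id
        intro y hy
        simp only [Set.mem_Icc] at hy
        exact Or.inl (by simp only [id_eq]; exact ne_of_gt (by linarith [hy.1])))
      (by
        intro y hy
        have hy0 : (0:ℝ) < y := by linarith [hy.1]
        have := Real.hasDerivAt_rpow_const (x := y) (p := 1 - α) (Or.inl (ne_of_gt hy0))
        convert this using 1
        rw [show (1 - α - 1) = -α by ring])
  have hc1 : 0 < c := by linarith [hc.1]
  have hle : (x + 1) ^ (-α) ≤ c ^ (-α) :=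
    Real.rpow_le_rpow_of_nonpos hc1 (by linarith [hc.2]) (by linarith)
  have heq : x ^ (1 - α) - (x + 1) ^ (1 - α) = (α - 1) * c ^ (-α) := by
    have h1 : (1 - α) * c ^ (-α) = ((x + 1) ^ (1 - α) - x ^ (1 - α)) / (x + 1 - x) := hceq
    have h2 : x + 1 - x = 1 := by ring
    rw [h2, div_one] at h1
    nlinarith [h1]
  rw [heq]
  exact mul_le_mul_of_nonneg_left hle (by linarith)

lemma summable_tail (α : ℝ) (hα : 1 < α) (n : ℤ) (hn : 1 ≤ n) :
    Summable (fun i : ℕ => ((n:ℝ) + i) ^ (-α)) := by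
  have hn1 : (1:ℝ) ≤ (n:ℝ) := by exact_mod_cast hn
  have hbase : Summable (fun i : ℕ => ((i : ℝ) + 1) ^ (-α)) := by
    have h : Summable (fun i : ℕ => ((i : ℝ)) ^ (-α)) :=
      Real.summable_nat_rpow.mpr (by linarith)
    have := (summable_nat_add_iff 1).mpr h
    simpa using this
  apply Summable.of_nonneg_of_le (fun i => Real.rpow_nonneg (by positivity) _) _ hbase
  intro i
  apply Real.rpow_le_rpow_of_nonpos (by positivity) (by linarith [Nat.cast_nonneg (α := ℝ) i])
    (by linarith)

lemma tail_le (α : ℝ) (hα : 1 < α) (n : ℤ) (hn : 1 ≤ n) :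
    ∑' i : ℕ, ((n:ℝ) + i) ^ (-α) ≤ (α / (α - 1)) * (n:ℝ) ^ (1 - α) := by
  have hn1 : (1:ℝ) ≤ (n:ℝ) := by exact_mod_cast hn
  have hn0 : (0:ℝ) < (n:ℝ) := by linarith
  set a : ℕ → ℝ := fun i => ((n:ℝ) + i) ^ (1 - α) with ha
  have hstep : ∀ i : ℕ, ((n:ℝ) + ((i + 1 : ℕ) : ℝ)) ^ (-α) ≤ (a i - a (i + 1)) / (α - 1) := by
    intro i
    have h := mvt_step α hα ((n:ℝ) + i) (by linarith [Nat.cast_nonneg (α := ℝ) i])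
    rw [le_div_iff₀ (by linarith : (0:ℝ) < α - 1)]
    have he1 : (n:ℝ) + ((i + 1 : ℕ) : ℝ) = ((n:ℝ) + i) + 1 := by push_cast; ring
    have h2 : a (i + 1) = (((n:ℝ) + i) + 1) ^ (1 - α) := by
      show ((n:ℝ) + ((i+1 : ℕ):ℝ)) ^ (1 - α) = _
      rw [he1]
    have h3 : a i = ((n:ℝ) + i) ^ (1 - α) := rfl
    rw [he1, h2, h3]
    nlinarith [h]
  have hanonneg : ∀ i, 0 ≤ a i := fun i => Real.rpow_nonneg (by positivity) _
  have hamono : ∀ i : ℕ, a (i + 1) ≤ a i := by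
    intro i
    apply Real.rpow_le_rpow_of_nonpos (by positivity) (by push_cast; linarith) (by linarith)
  have hpartial : ∀ N : ℕ, ∑ i ∈ Finset.range N, ((n:ℝ) + i) ^ (-α) ≤
      (α / (α - 1)) * (n:ℝ) ^ (1 - α) := by
    intro N
    have hsub : ∑ i ∈ Finset.range N, ((n:ℝ) + i) ^ (-α) ≤
        ∑ i ∈ Finset.range (N + 1), ((n:ℝ) + i) ^ (-α) := by
      apply Finset.sum_le_sum_of_subset_of_nonneg (Finset.range_subset_range.mpr (by omega))
      intro i _ _
      exact Real.rpow_nonneg (by positivity) _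
    have hsucc : ∑ i ∈ Finset.range (N + 1), ((n:ℝ) + i) ^ (-α) =
        (∑ i ∈ Finset.range N, ((n:ℝ) + (i + 1 : ℕ)) ^ (-α)) + ((n:ℝ) + (0:ℕ)) ^ (-α) :=
      Finset.sum_range_succ' _ N
    have htele : ∑ i ∈ Finset.range N, ((n:ℝ) + (i + 1 : ℕ)) ^ (-α) ≤
        (a 0 - a N) / (α - 1) := by
      calc ∑ i ∈ Finset.range N, ((n:ℝ) + (i + 1 : ℕ)) ^ (-α)
          ≤ ∑ i ∈ Finset.range N, (a i - a (i + 1)) / (α - 1) := by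
            apply Finset.sum_le_sum; intro i _; exact hstep i
        _ = (∑ i ∈ Finset.range N, (a i - a (i + 1))) / (α - 1) := by
            rw [Finset.sum_div]
        _ = (a 0 - a N) / (α - 1) := by rw [Finset.sum_range_sub' a N]
    have h0 : ((n:ℝ) + (0:ℕ)) ^ (-α) ≤ (n:ℝ) ^ (1 - α) := by
      push_cast
      rw [add_zero]
      exact Real.rpow_le_rpow_of_exponent_le hn1 (by linarith)
    have ha0 : a 0 = (n:ℝ) ^ (1 - α) := by rw [ha]; push_cast; ring_nf
    have : (a 0 - a N) / (α - 1) ≤ (n:ℝ) ^ (1 - α) / (α - 1) := by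
      apply div_le_div_of_nonneg_right ?_ (by linarith)
      · linarith [hanonneg N, ha0.ge]
    calc ∑ i ∈ Finset.range N, ((n:ℝ) + i) ^ (-α)
        ≤ (∑ i ∈ Finset.range N, ((n:ℝ) + (i + 1 : ℕ)) ^ (-α)) + ((n:ℝ) + (0:ℕ)) ^ (-α) := by
          rw [← hsucc]; exact hsub
      _ ≤ (a 0 - a N) / (α - 1) + (n:ℝ) ^ (1 - α) := add_le_add htele h0
      _ ≤ (n:ℝ) ^ (1 - α) / (α - 1) + (n:ℝ) ^ (1 - α) := by linarith [this]
      _ = (α / (α - 1)) * (n:ℝ) ^ (1 - α) := by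
          have hne : α - 1 ≠ 0 := by linarith
          field_simp
          ring
  exact Summable.tsum_le_of_sum_range_le (summable_tail α hα n hn) hpartial


lemma tsum_indic_le {f : ℕ → ℝ≥0∞} {Y : ℝ≥0∞} {P : ℕ → Prop} [DecidablePred P] (c : ℕ)
    (h : ∀ v, P v → v = c ∧ f v ≤ Y) :
    (∑' v : ℕ, if P v then f v else 0) ≤ Y := by
  calc (∑' v : ℕ, if P v then f v else 0) ≤ ∑' v : ℕ, (if v = c then Y else 0) := by
        apply ENNReal.tsum_le_tsum
        intro v
        by_cases hv : P v
        · obtain ⟨h1, h2⟩ := h v hv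
          simp only [if_pos hv, if_pos h1]
          exact h2
        · simp [hv]
    _ = Y := by
        rw [tsum_eq_single c (fun b hb => if_neg hb)]
        simp

end Stmt14


theorem stmt_14 (α : ℝ) (hα : 1 < α) (u : ℝ)
    (hu : u = 2 ^ α * ∑' m : ℤ, dZ 0 m ^ (-α)) :
    ∃ C : ℝ, 0 < C ∧ ∀ n : ℤ, 1 ≤ n →
      (∑' q : (ℕ × ℕ) × (ℕ × ℕ) × Bool × Bool,
          (let k : ℤ := n + q.1.1
           let l : ℤ := n - 1 - q.1.2
           let k' : ℤ := q.2.1.1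
           let l' : ℤ := -1 - q.2.1.2
           let a : ℤ := if q.2.2.1 then k else l
           let b : ℤ := if q.2.2.1 then l else k
           let a' : ℤ := if q.2.2.2 then k' else l'
           let b' : ℤ := if q.2.2.2 then l' else k'
           if b = b' then dZ a b ^ (-α) * dZ a' b ^ (-α) * dZ a a' ^ (-α) else 0)
        ≤ u ^ 2 * ∑' p : ℕ × ℕ, dZ (n + p.1) (-1 - p.2) ^ (-(2 * α))) ∧
      u ^ 2 * (∑' p : ℕ × ℕ, dZ (n + p.1) (-1 - p.2) ^ (-(2 * α)))
        ≤ C * (n : ℝ) ^ (2 - 2 * α) := by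
  classical
  have hnn : ∀ x y : ℤ, 0 ≤ dZ x y ^ (-α) := Stmt14.rpow_dZ_nonneg α
  have hT : Summable (fun m : ℤ => dZ 0 m ^ (-α)) := Stmt14.summable_base α hα
  have hT0 : 0 ≤ ∑' m : ℤ, dZ 0 m ^ (-α) := tsum_nonneg fun m => hnn 0 m
  have h2α : (2:ℝ) < 2 ^ α := by
    calc (2:ℝ) = 2 ^ (1:ℝ) := (Real.rpow_one 2).symm
    _ < 2 ^ α := Real.rpow_lt_rpow_of_exponent_lt one_lt_two hα
  have hT3 : (3:ℝ) ≤ ∑' m : ℤ, dZ 0 m ^ (-α) := by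
    have hsum := Summable.sum_le_tsum ({-1,0,1} : Finset ℤ)
      (fun m _ => hnn 0 m) hT
    have h1 : ∑ m ∈ ({-1,0,1} : Finset ℤ), dZ 0 m ^ (-α) = 3 := by
      have e1 : dZ 0 (-1) = 1 := by unfold dZ; norm_num
      have e2 : dZ 0 0 = 1 := by unfold dZ; norm_num
      have e3 : dZ 0 1 = 1 := by unfold dZ; norm_num
      rw [Finset.sum_insert (by decide), Finset.sum_insert (by decide),
        Finset.sum_singleton, e1, e2, e3, Real.one_rpow]
      norm_num
    linarith
  have hu6 : (6:ℝ) ≤ u := by rw [hu]; nlinarith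
  have hu0 : (0:ℝ) ≤ u := by linarith
  have hα1 : (0:ℝ) < α - 1 := by linarith
  refine ⟨u ^ 2 * (α / (α - 1)) ^ 2,
    mul_pos (pow_pos (by linarith) 2) (pow_pos (div_pos (by linarith) hα1) 2), ?_⟩
  intro n hn
  have hn1 : (1:ℝ) ≤ (n:ℝ) := by exact_mod_cast hn
  have hn0 : (0:ℝ) < (n:ℝ) := by linarith
  have hiz : ∀ i : ℕ, (0:ℝ) < (n:ℝ) + i := fun i => by
    have := Nat.cast_nonneg (α := ℝ) i; linarith
  have hnn2 : ∀ x y : ℤ, 0 ≤ dZ x y ^ (-(2*α)) := Stmt14.rpow_dZ_nonneg (2*α)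
  -- term bound for S
  have htermS : ∀ i j : ℕ, dZ (n + (i:ℤ)) (-1 - (j:ℤ)) ^ (-(2*α)) ≤
      ((n:ℝ) + i) ^ (-α) * ((n:ℝ) + j) ^ (-α) := by
    intro i j
    have hdS : dZ (n + (i:ℤ)) (-1 - (j:ℤ)) = (n:ℝ) + 1 + i + j := by
      unfold dZ
      push_cast
      have e1 : (n:ℝ) + i - (-1 - j) = (n:ℝ) + 1 + i + j := by ring
      have hij : (0:ℝ) ≤ (i:ℝ) := Nat.cast_nonneg i
      have hij' : (0:ℝ) ≤ (j:ℝ) := Nat.cast_nonneg j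
      rw [e1, abs_of_nonneg (by linarith), max_eq_left (by linarith)]
    rw [hdS]
    have hx := hiz i
    have hy := hiz j
    have hij : (0:ℝ) ≤ (i:ℝ) := Nat.cast_nonneg i
    have hij' : (0:ℝ) ≤ (j:ℝ) := Nat.cast_nonneg j
    have hA : (0:ℝ) < (n:ℝ) + 1 + i + j := by linarith
    have hsq : ((n:ℝ) + i) * ((n:ℝ) + j) ≤ ((n:ℝ) + 1 + i + j) ^ (2:ℝ) := by
      rw [show ((2:ℝ)) = ((2:ℕ):ℝ) by norm_num, Real.rpow_natCast]
      have h1 : (n:ℝ) + i ≤ (n:ℝ) + 1 + i + j := by linarith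
      have h2 : (n:ℝ) + j ≤ (n:ℝ) + 1 + i + j := by linarith
      calc ((n:ℝ) + i) * ((n:ℝ) + j) ≤ ((n:ℝ) + 1 + i + j) * ((n:ℝ) + 1 + i + j) :=
            mul_le_mul h1 h2 hy.le hA.le
        _ = ((n:ℝ) + 1 + i + j) ^ (2:ℕ) := by ring
    calc ((n:ℝ) + 1 + i + j) ^ (-(2*α))
        = (((n:ℝ) + 1 + i + j) ^ (2:ℝ)) ^ (-α) := by
          rw [← Real.rpow_mul hA.le]
          congr 1
          ring
      _ ≤ (((n:ℝ) + i) * ((n:ℝ) + j)) ^ (-α) :=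
          Real.rpow_le_rpow_of_nonpos (by positivity) hsq (by linarith)
      _ = ((n:ℝ) + i) ^ (-α) * ((n:ℝ) + j) ^ (-α) := Real.mul_rpow hx.le hy.le
  have htail := Stmt14.tail_le α hα n hn
  have htailsum := Stmt14.summable_tail α hα n hn
  set KB : ℝ := (α / (α - 1)) * (n:ℝ) ^ (1 - α) with hKB
  have hKB0 : 0 ≤ KB :=
    mul_nonneg (le_of_lt (div_pos (by linarith) hα1)) (Real.rpow_nonneg hn0.le _)
  have hFe : ∑' i : ℕ, ENNReal.ofReal (((n:ℝ) + i) ^ (-α)) ≤ ENNReal.ofReal KB := by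
    rw [← ENNReal.ofReal_tsum_of_nonneg (fun i => Real.rpow_nonneg (hiz i).le _) htailsum]
    exact ENNReal.ofReal_le_ofReal htail
  have hSe_le : (∑' (i : ℕ) (j : ℕ), ENNReal.ofReal (dZ (n + i) (-1 - j) ^ (-(2*α)))) ≤
      ENNReal.ofReal KB * ENNReal.ofReal KB := by
    calc (∑' (i : ℕ) (j : ℕ), ENNReal.ofReal (dZ (n + i) (-1 - j) ^ (-(2*α))))
        ≤ ∑' (i : ℕ) (j : ℕ),
            ENNReal.ofReal (((n:ℝ) + i) ^ (-α)) * ENNReal.ofReal (((n:ℝ) + j) ^ (-α)) := by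
          refine ENNReal.tsum_le_tsum fun i => ENNReal.tsum_le_tsum fun j => ?_
          rw [← ENNReal.ofReal_mul (Real.rpow_nonneg (hiz i).le _)]
          exact ENNReal.ofReal_le_ofReal (htermS i j)
      _ = (∑' i : ℕ, ENNReal.ofReal (((n:ℝ) + i) ^ (-α))) *
            (∑' j : ℕ, ENNReal.ofReal (((n:ℝ) + j) ^ (-α))) := by
          simp only [ENNReal.tsum_mul_left]
          rw [ENNReal.tsum_mul_right]
      _ ≤ ENNReal.ofReal KB * ENNReal.ofReal KB := mul_le_mul' hFe hFe
  have hprodSe : (∑' (p : ℕ × ℕ), ENNReal.ofReal (dZ (n + p.1) (-1 - p.2) ^ (-(2*α)))) =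
      ∑' (i : ℕ) (j : ℕ), ENNReal.ofReal (dZ (n + i) (-1 - j) ^ (-(2*α))) :=
    ENNReal.tsum_prod'
  have hSfin : (∑' (p : ℕ × ℕ), ENNReal.ofReal (dZ (n + p.1) (-1 - p.2) ^ (-(2*α)))) ≠ ⊤ := by
    rw [hprodSe]
    exact (lt_of_le_of_lt hSe_le (ENNReal.mul_lt_top ENNReal.ofReal_lt_top
      ENNReal.ofReal_lt_top)).ne
  have hSsum : Summable (fun p : ℕ × ℕ => dZ (n + p.1) (-1 - p.2) ^ (-(2*α))) :=
    Stmt14.summable_of_ofReal_lt_top (fun p => hnn2 _ _) hSfin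
  set S : ℝ := ∑' p : ℕ × ℕ, dZ (n + p.1) (-1 - p.2) ^ (-(2 * α)) with hS
  have hS' : S = ∑' p : ℕ × ℕ, dZ (n + p.1) (-1 - p.2) ^ (-(2*α)) := by
    rw [hS]
  have hS0 : 0 ≤ S := by rw [hS']; exact tsum_nonneg fun p => hnn2 _ _
  have hSle : S ≤ KB * KB := by
    rw [hS']
    refine Stmt14.tsum_le_of_ofReal_le (fun p => hnn2 _ _) (mul_nonneg hKB0 hKB0) ?_
    rw [ENNReal.ofReal_mul hKB0, hprodSe]
    exact hSe_le
  constructor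
  · -- main inequality
    refine Stmt14.tsum_le_of_ofReal_le ?_ (mul_nonneg (sq_nonneg u) hS0) ?_
    · intro q
      dsimp only
      split_ifs <;>
        first
          | exact mul_nonneg (mul_nonneg (hnn _ _) (hnn _ _)) (hnn _ _)
          | exact le_refl 0
    · simp only [ENNReal.tsum_prod']
      simp only [tsum_bool]
      simp only [Bool.false_eq_true, if_false, if_true]
      simp only [apply_ite ENNReal.ofReal, ENNReal.ofReal_zero]
      simp only [ENNReal.tsum_add]
      set Se : ENNReal := ∑' (i : ℕ) (j : ℕ), ENNReal.ofReal (dZ (n + i) (-1 - j) ^ (-(2*α)))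
        with hSe
      have hkey : ∀ (x y : ℤ) (e : ℕ → ℤ), Function.Injective e →
          (∑' v : ℕ, Stmt14.Dd α x y * (Stmt14.Dd α x (e v) * Stmt14.Dd α (e v) y))
            ≤ ENNReal.ofReal (2*u) * ENNReal.ofReal (dZ x y ^ (-(2*α))) := by
        intro x y e he
        rw [ENNReal.tsum_mul_left]
        calc Stmt14.Dd α x y * ∑' v : ℕ, Stmt14.Dd α x (e v) * Stmt14.Dd α (e v) y
            ≤ Stmt14.Dd α x y * (ENNReal.ofReal (2*u) * Stmt14.Dd α x y) :=
              mul_le_mul_right (Stmt14.conv_nat α hα u hu e he x y) _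
          _ = ENNReal.ofReal (2*u) * (Stmt14.Dd α x y * Stmt14.Dd α x y) := by ring
          _ = ENNReal.ofReal (2*u) * ENNReal.ofReal (dZ x y ^ (-(2*α))) := by
              rw [Stmt14.Dd_mul_self]
      have hcastinj : Function.Injective (fun v : ℕ => (v : ℤ)) := fun a b hab => by
        have : (a : ℤ) = (b : ℤ) := hab
        omega
      have heinj : Function.Injective (fun v : ℕ => n - 1 - (v : ℤ)) := fun a b hab => by
        simp only at hab; omega
      -- Case FF
      have hFF : (∑' (i : ℕ) (j : ℕ) (i' : ℕ) (j' : ℕ),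
          if n + (i:ℤ) = (i':ℤ) then
            ENNReal.ofReal (dZ (n - 1 - j) (n + i) ^ (-α) * dZ (-1 - j') (n + i) ^ (-α) *
              dZ (n - 1 - j) (-1 - j') ^ (-α)) else 0) ≤ ENNReal.ofReal (2*u) * Se := by
        calc (∑' (i : ℕ) (j : ℕ) (i' : ℕ) (j' : ℕ),
            if n + (i:ℤ) = (i':ℤ) then
              ENNReal.ofReal (dZ (n - 1 - j) (n + i) ^ (-α) * dZ (-1 - j') (n + i) ^ (-α) *
                dZ (n - 1 - j) (-1 - j') ^ (-α)) else 0)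
            ≤ ∑' (i : ℕ) (j : ℕ) (j' : ℕ),
              Stmt14.Dd α (n + i) (-1 - j') *
                (Stmt14.Dd α (n + i) (n - 1 - j) * Stmt14.Dd α (n - 1 - j) (-1 - j')) := by
              refine ENNReal.tsum_le_tsum fun i => ENNReal.tsum_le_tsum fun j => ?_
              calc (∑' (i' : ℕ) (j' : ℕ),
                  if n + (i:ℤ) = (i':ℤ) then
                    ENNReal.ofReal (dZ (n - 1 - j) (n + i) ^ (-α) *
                      dZ (-1 - j') (n + i) ^ (-α) * dZ (n - 1 - j) (-1 - j') ^ (-α)) else 0)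
                  = ∑' (j' : ℕ) (i' : ℕ),
                    if n + (i:ℤ) = (i':ℤ) then
                      ENNReal.ofReal (dZ (n - 1 - j) (n + i) ^ (-α) *
                        dZ (-1 - j') (n + i) ^ (-α) * dZ (n - 1 - j) (-1 - j') ^ (-α)) else 0 :=
                    ENNReal.tsum_comm
                _ ≤ ∑' (j' : ℕ),
                    Stmt14.Dd α (n + i) (-1 - j') *
                      (Stmt14.Dd α (n + i) (n - 1 - j) * Stmt14.Dd α (n - 1 - j) (-1 - j')) := by
                    refine ENNReal.tsum_le_tsum fun j' => ?_
                    refine Stmt14.tsum_indic_le ((n + (i:ℤ)).toNat) (fun v hv => ⟨by omega, ?_⟩)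
                    apply le_of_eq
                    unfold Stmt14.Dd
                    rw [Stmt14.dZ_symm (n - 1 - (j:ℤ)) (n + i),
                      Stmt14.dZ_symm (-1 - (j':ℤ)) (n + i),
                      ENNReal.ofReal_mul (mul_nonneg (hnn _ _) (hnn _ _)),
                      ENNReal.ofReal_mul (hnn _ _)]
                    ring
          _ = ∑' (i : ℕ) (j' : ℕ) (j : ℕ),
              Stmt14.Dd α (n + i) (-1 - j') *
                (Stmt14.Dd α (n + i) (n - 1 - j) * Stmt14.Dd α (n - 1 - j) (-1 - j')) :=
            tsum_congr fun i => ENNReal.tsum_comm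
          _ ≤ ∑' (i : ℕ) (j' : ℕ),
              ENNReal.ofReal (2*u) * ENNReal.ofReal (dZ (n + i) (-1 - j') ^ (-(2*α))) :=
            ENNReal.tsum_le_tsum fun i => ENNReal.tsum_le_tsum fun j' =>
              hkey (n + i) (-1 - j') _ heinj
          _ = ENNReal.ofReal (2*u) * Se := by
            simp only [ENNReal.tsum_mul_left, hSe]
      -- Case FT : impossible
      have hFT : (∑' (i : ℕ) (j : ℕ) (i' : ℕ) (j' : ℕ),
          if n + (i:ℤ) = -1 - (j':ℤ) then
            ENNReal.ofReal (dZ (n - 1 - j) (n + i) ^ (-α) * dZ (i':ℤ) (n + i) ^ (-α) *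
              dZ (n - 1 - j) (i':ℤ) ^ (-α)) else 0) = 0 := by
        have hz : ∀ (i j i' j' : ℕ),
            (if n + (i:ℤ) = -1 - (j':ℤ) then
              ENNReal.ofReal (dZ (n - 1 - j) (n + i) ^ (-α) * dZ (i':ℤ) (n + i) ^ (-α) *
                dZ (n - 1 - j) (i':ℤ) ^ (-α)) else 0) = 0 := by
          intro i j i' j'
          rw [if_neg (by omega)]
        simp only [hz, tsum_zero]
      -- Case TF
      have hTF : (∑' (i : ℕ) (j : ℕ) (i' : ℕ) (j' : ℕ),
          if n - 1 - (j:ℤ) = (i':ℤ) then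
            ENNReal.ofReal (dZ (n + i) (n - 1 - j) ^ (-α) * dZ (-1 - j') (n - 1 - j) ^ (-α) *
              dZ (n + i) (-1 - j') ^ (-α)) else 0) ≤ ENNReal.ofReal (2*u) * Se := by
        calc (∑' (i : ℕ) (j : ℕ) (i' : ℕ) (j' : ℕ),
            if n - 1 - (j:ℤ) = (i':ℤ) then
              ENNReal.ofReal (dZ (n + i) (n - 1 - j) ^ (-α) * dZ (-1 - j') (n - 1 - j) ^ (-α) *
                dZ (n + i) (-1 - j') ^ (-α)) else 0)
            ≤ ∑' (i : ℕ) (j : ℕ) (j' : ℕ),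
              Stmt14.Dd α (n + i) (-1 - j') *
                (Stmt14.Dd α (n + i) (n - 1 - j) * Stmt14.Dd α (n - 1 - j) (-1 - j')) := by
              refine ENNReal.tsum_le_tsum fun i => ENNReal.tsum_le_tsum fun j => ?_
              calc (∑' (i' : ℕ) (j' : ℕ),
                  if n - 1 - (j:ℤ) = (i':ℤ) then
                    ENNReal.ofReal (dZ (n + i) (n - 1 - j) ^ (-α) *
                      dZ (-1 - j') (n - 1 - j) ^ (-α) * dZ (n + i) (-1 - j') ^ (-α)) else 0)
                  = ∑' (j' : ℕ) (i' : ℕ),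
                    if n - 1 - (j:ℤ) = (i':ℤ) then
                      ENNReal.ofReal (dZ (n + i) (n - 1 - j) ^ (-α) *
                        dZ (-1 - j') (n - 1 - j) ^ (-α) * dZ (n + i) (-1 - j') ^ (-α)) else 0 :=
                    ENNReal.tsum_comm
                _ ≤ ∑' (j' : ℕ),
                    Stmt14.Dd α (n + i) (-1 - j') *
                      (Stmt14.Dd α (n + i) (n - 1 - j) * Stmt14.Dd α (n - 1 - j) (-1 - j')) := by
                    refine ENNReal.tsum_le_tsum fun j' => ?_
                    refine Stmt14.tsum_indic_le ((n - 1 - (j:ℤ)).toNat)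
                      (fun v hv => ⟨by omega, ?_⟩)
                    apply le_of_eq
                    unfold Stmt14.Dd
                    rw [Stmt14.dZ_symm (-1 - (j':ℤ)) (n - 1 - j),
                      ENNReal.ofReal_mul (mul_nonneg (hnn _ _) (hnn _ _)),
                      ENNReal.ofReal_mul (hnn _ _)]
                    ring
          _ = ∑' (i : ℕ) (j' : ℕ) (j : ℕ),
              Stmt14.Dd α (n + i) (-1 - j') *
                (Stmt14.Dd α (n + i) (n - 1 - j) * Stmt14.Dd α (n - 1 - j) (-1 - j')) :=
            tsum_congr fun i => ENNReal.tsum_comm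
          _ ≤ ∑' (i : ℕ) (j' : ℕ),
              ENNReal.ofReal (2*u) * ENNReal.ofReal (dZ (n + i) (-1 - j') ^ (-(2*α))) :=
            ENNReal.tsum_le_tsum fun i => ENNReal.tsum_le_tsum fun j' =>
              hkey (n + i) (-1 - j') _ heinj
          _ = ENNReal.ofReal (2*u) * Se := by
            simp only [ENNReal.tsum_mul_left, hSe]
      -- Case TT
      have hTT : (∑' (i : ℕ) (j : ℕ) (i' : ℕ) (j' : ℕ),
          if n - 1 - (j:ℤ) = -1 - (j':ℤ) then
            ENNReal.ofReal (dZ (n + i) (n - 1 - j) ^ (-α) * dZ (i':ℤ) (n - 1 - j) ^ (-α) *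
              dZ (n + i) (i':ℤ) ^ (-α)) else 0) ≤ ENNReal.ofReal (2*u) * Se := by
        calc (∑' (i : ℕ) (j : ℕ) (i' : ℕ) (j' : ℕ),
            if n - 1 - (j:ℤ) = -1 - (j':ℤ) then
              ENNReal.ofReal (dZ (n + i) (n - 1 - j) ^ (-α) * dZ (i':ℤ) (n - 1 - j) ^ (-α) *
                dZ (n + i) (i':ℤ) ^ (-α)) else 0)
            = ∑' (i : ℕ) (i' : ℕ) (j : ℕ) (j' : ℕ),
              if n - 1 - (j:ℤ) = -1 - (j':ℤ) then
                ENNReal.ofReal (dZ (n + i) (n - 1 - j) ^ (-α) * dZ (i':ℤ) (n - 1 - j) ^ (-α) *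
                  dZ (n + i) (i':ℤ) ^ (-α)) else 0 :=
              tsum_congr fun i => ENNReal.tsum_comm
          _ = ∑' (i : ℕ) (i' : ℕ) (j' : ℕ) (j : ℕ),
              if n - 1 - (j:ℤ) = -1 - (j':ℤ) then
                ENNReal.ofReal (dZ (n + i) (n - 1 - j) ^ (-α) * dZ (i':ℤ) (n - 1 - j) ^ (-α) *
                  dZ (n + i) (i':ℤ) ^ (-α)) else 0 :=
              tsum_congr fun i => tsum_congr fun i' => ENNReal.tsum_comm
          _ ≤ ∑' (i : ℕ) (i' : ℕ) (j' : ℕ),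
              Stmt14.Dd α (n + i) (-1 - j') *
                (Stmt14.Dd α (n + i) (i':ℤ) * Stmt14.Dd α (i':ℤ) (-1 - j')) := by
              refine ENNReal.tsum_le_tsum fun i => ENNReal.tsum_le_tsum fun i' =>
                ENNReal.tsum_le_tsum fun j' => ?_
              refine Stmt14.tsum_indic_le ((n + (j':ℤ)).toNat) (fun v hv => ⟨by omega, ?_⟩)
              have hv' : n - 1 - (v:ℤ) = -1 - (j':ℤ) := hv
              rw [hv']
              apply le_of_eq
              unfold Stmt14.Dd
              rw [Stmt14.dZ_symm ((i':ℕ):ℤ) (-1 - (j':ℤ)),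
                ENNReal.ofReal_mul (mul_nonneg (hnn _ _) (hnn _ _)),
                ENNReal.ofReal_mul (hnn _ _)]
              ring
          _ = ∑' (i : ℕ) (j' : ℕ) (i' : ℕ),
              Stmt14.Dd α (n + i) (-1 - j') *
                (Stmt14.Dd α (n + i) (i':ℤ) * Stmt14.Dd α (i':ℤ) (-1 - j')) :=
            tsum_congr fun i => ENNReal.tsum_comm
          _ ≤ ∑' (i : ℕ) (j' : ℕ),
              ENNReal.ofReal (2*u) * ENNReal.ofReal (dZ (n + i) (-1 - j') ^ (-(2*α))) :=
            ENNReal.tsum_le_tsum fun i => ENNReal.tsum_le_tsum fun j' =>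
              hkey (n + i) (-1 - j') _ hcastinj
          _ = ENNReal.ofReal (2*u) * Se := by
            simp only [ENNReal.tsum_mul_left, hSe]
      have hSeS : Se = ENNReal.ofReal S := by
        rw [hS', ENNReal.ofReal_tsum_of_nonneg (fun p => hnn2 _ _) hSsum, ENNReal.tsum_prod',
          hSe]
      calc _ ≤ (ENNReal.ofReal (2*u) * Se + 0) +
            (ENNReal.ofReal (2*u) * Se + ENNReal.ofReal (2*u) * Se) :=
          add_le_add (add_le_add hFF hFT.le) (add_le_add hTF hTT)
        _ = (ENNReal.ofReal (2*u) + ENNReal.ofReal (2*u) + ENNReal.ofReal (2*u)) *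
              ENNReal.ofReal S := by
            rw [hSeS]; ring
        _ = ENNReal.ofReal (6*u) * ENNReal.ofReal S := by
            rw [← ENNReal.ofReal_add (by linarith) (by linarith),
              ← ENNReal.ofReal_add (by linarith) (by linarith)]
            congr 1
            ring
        _ = ENNReal.ofReal (6*u*S) := by
            rw [← ENNReal.ofReal_mul (by linarith)]
        _ ≤ ENNReal.ofReal (u^2 * S) := ENNReal.ofReal_le_ofReal (by nlinarith [mul_nonneg (mul_nonneg (by linarith : (0:ℝ) ≤ u - 6) hu0) hS0])
  · -- power bound
    calc u ^ 2 * S ≤ u ^ 2 * (KB * KB) := mul_le_mul_of_nonneg_left hSle (sq_nonneg u)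
      _ = u ^ 2 * (α / (α - 1)) ^ 2 * ((n:ℝ) ^ (1-α) * (n:ℝ) ^ (1-α)) := by
          rw [hKB]; ring
      _ = u ^ 2 * (α / (α - 1)) ^ 2 * (n:ℝ) ^ (2 - 2*α) := by
          rw [← Real.rpow_add hn0, show (1-α) + (1-α) = 2 - 2*α by ring]
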